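/- Under the Case (ii) standing assumptions and the mean field reward assumptions, the map Ψ : 𝕍×𝕍 → ℝ defined by Ψ(ν₁, μ₁, ν₂, μ₂) = ∫ℓ(x, ν₁) ν₂(dx) + Σ_{i=1}^{d3} ∫ g_i(x, ν₁) μ₂,ᵢ(dx,dy) (which does not depend on μ₁) is continuous, where 𝕍×𝕍 carries the product of the weak-convergence topologies. -/

import Mathlib

open MeasureTheory Filter Topology Set
open scoped NNReal ENNReal

noncomputable section

/-- `ℝ^d` with the Euclidean norm. -/
abbrev Euc (d : ℕ) := EuclideanSpace ℝ (Fin d)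

/-- The nonnegative orthant `[0,∞)^d` as a subset of `ℝ^d`. -/
abbrev Orthant (d : ℕ) : Set (Euc d) := {x | ∀ i, 0 ≤ x i}

/-- The state space `𝕏₊ = [0,∞)^d`. -/
abbrev Xp (d : ℕ) := ↥(Orthant d)

/-- i-th standard basis vector. -/
def esingle {d : ℕ} (i : Fin d) : Euc d := EuclideanSpace.single i (1 : ℝ)

/-- Partial derivative `∂H/∂x_i`. -/
def pd {d : ℕ} (H : Euc d → ℝ) (i : Fin d) (x : Euc d) : ℝ := fderiv ℝ H x (esingle i)

/-- Second partial derivative `∂²H/∂x_i∂x_j`. -/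
def pd2 {d : ℕ} (H : Euc d → ℝ) (i j : Fin d) (x : Euc d) : ℝ :=
  fderiv ℝ (fun y => pd H j y) x (esingle i)

/-- Test functions: twice continuously differentiable with gradient vanishing
outside a compact set.  An element of `C²_b(𝕏₊)` is (the restriction to `𝕏₊` of)
such a function. -/
def TestFun {d : ℕ} (H : Euc d → ℝ) : Prop :=
  ContDiff ℝ 2 H ∧ ∃ K : Set (Euc d), IsCompact K ∧ ∀ x ∉ K, fderiv ℝ H x = 0

/-- Build a Euclidean vector from its coordinates. -/
def vecOf {d : ℕ} (v : Fin d → ℝ) : Euc d := (EuclideanSpace.equiv (Fin d) ℝ).symm v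

variable {d d1 d3 : ℕ}

/-- The second-order generator `𝒜`: for `h ∈ C²_b(𝕏₊)` given by an extension `H`,
`(𝒜h)(x) = (1/2)Σ_{ij} a_{ij}(x) ∂²H/∂x_i∂x_j + Σ_i β_i(x) ∂H/∂x_i`, where `a = σσᵀ`. -/
def genA2 (β : Xp d → Euc d) (σ : Xp d → Fin d → Fin d1 → ℝ)
    (H : Euc d → ℝ) (x : Xp d) : ℝ :=
  (1/2) * ∑ i, ∑ j, (∑ k, σ x i k * σ x j k) * pd2 H i j (x : Euc d)
    + ∑ i, β x i * pd H i (x : Euc d)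

/-- The singular-control operator `ℬ_i`:
`(ℬ_i h)(x,y) = (h(x − yγ(x)e_i) − h(x))/y` for `y > 0` and
`(ℬ_i h)(x,0) = −(γ(x)e_i)·∇h(x)`. -/
def genB2 (γ : Xp d → Fin d → Fin d3 → ℝ) (H : Euc d → ℝ) (i : Fin d3)
    (x : Xp d) (y : ℝ≥0) : ℝ :=
  if 0 < y then (H ((x : Euc d) - (y : ℝ) • vecOf (fun j => γ x j i)) - H (x : Euc d)) / (y : ℝ)
  else - ∑ j, γ x j i * pd H j (x : Euc d)

/-- `V̄(x) = Σ_i x_i^{4r}`. -/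
def Vbar (r : ℝ) (x : Xp d) : ℝ := ∑ i, ((x : Euc d) i) ^ (4*r)

/-- `𝒜V̄` given by the generator formula applied to `V̄`. -/
def AVbar (r : ℝ) (β : Xp d → Euc d) (σ : Xp d → Fin d → Fin d1 → ℝ) (x : Xp d) : ℝ :=
  (1/2) * ∑ i, (∑ k, σ x i k * σ x i k) * ((4*r) * (4*r - 1)) * ((x : Euc d) i) ^ (4*r - 2)
    + ∑ i, β x i * (4*r) * ((x : Euc d) i) ^ (4*r - 1)

/-- The signed integral `∫ u dm ∈ [−∞,∞]` (defined as `∫u⁺ − ∫u⁻` in the extended reals). -/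
def eint {α : Type*} [MeasurableSpace α] (m : Measure α) (u : α → ℝ) : EReal :=
  (∫⁻ a, ENNReal.ofReal (u a) ∂m).toEReal - (∫⁻ a, ENNReal.ofReal (-(u a)) ∂m).toEReal

/-- Feasible pairs `(ν, μ)` of the linear programming formulation of Case (ii):
`ν` is a Borel probability measure on `𝕏₊`, the `μ_i` are finite Borel measures on
`𝕏₊×[0,∞)` supported in `{(x,y) : x − yγ(x)e_i ∈ 𝕏₊}`, for every test function `h`
one has `∫𝒜h dν + Σ_i ∫ℬ_i h dμ_i = 0`, and `∫𝒜V̄ dν ≥ 0`. -/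
def Feasible2 (β : Xp d → Euc d) (σ : Xp d → Fin d → Fin d1 → ℝ)
    (γ : Xp d → Fin d → Fin d3 → ℝ) (r : ℝ)
    (ν : Measure (Xp d)) (μ : Fin d3 → Measure (Xp d × ℝ≥0)) : Prop :=
  IsProbabilityMeasure ν ∧ (∀ i, IsFiniteMeasure (μ i)) ∧
  (∀ i, μ i {p : Xp d × ℝ≥0 |
      ¬ ((p.1 : Euc d) - (p.2 : ℝ) • vecOf (fun j => γ p.1 j i) ∈ Orthant d)} = 0) ∧
  (∀ H : Euc d → ℝ, TestFun H →
      ∫ x, genA2 β σ H x ∂ν + ∑ i, ∫ p, genB2 γ H i p.1 p.2 ∂(μ i) = 0) ∧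
  0 ≤ eint ν (AVbar r β σ)

/-- Standing assumptions of Case (ii). -/
structure CaseIIAssumptions (β : Xp d → Euc d) (σ : Xp d → Fin d → Fin d1 → ℝ)
    (γ : Xp d → Fin d → Fin d3 → ℝ) (r s cσ c₀ c₁ c₂ cγ γbar : ℝ) : Prop where
  hd : 0 < d
  hd1 : 0 < d1
  hd3 : 0 < d3
  hr : 1 ≤ r
  hs : s < 1 + r
  hcσ : 0 < cσ
  hc₀ : 0 < c₀
  hc₁ : 0 < c₁
  hc₂ : 0 < c₂
  hcγ : 0 < cγ
  hγbar : 0 < γbar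
  βcont : Continuous β
  σcont : Continuous σ
  γcont : Continuous γ
  /-- `|σ(x)|² ≤ c_σ(1 + |x|^s)` (Frobenius norm). -/
  σgrowth : ∀ x : Xp d, ∑ i, ∑ k, (σ x i k)^2 ≤ cσ * (1 + ‖(x : Euc d)‖ ^ s)
  /-- `β_i(x) ≤ c₀ − c₁ x_i^r`. -/
  βbound : ∀ (x : Xp d) (i : Fin d), β x i ≤ c₀ - c₁ * ((x : Euc d) i) ^ r
  /-- `|β(x)| ≤ c₂(1 + |x|^{2r})`. -/
  βgrowth : ∀ x : Xp d, ‖β x‖ ≤ c₂ * (1 + ‖(x : Euc d)‖ ^ (2*r))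
  /-- `γ̄ ≤ γ_{ij}(x) ≤ c_γ`. -/
  γbounds : ∀ (x : Xp d) (i : Fin d) (j : Fin d3), γbar ≤ γ x i j ∧ γ x i j ≤ cγ

/-- The feasible set `𝕍`, regarded as a subset of the product of the space of Borel
probability measures on `𝕏₊` and the `d3`-fold product of the space of finite Borel
measures on `𝕏₊×[0,∞)`, each equipped with the topology of weak convergence. -/
def Vset (β : Xp d → Euc d) (σ : Xp d → Fin d → Fin d1 → ℝ)
    (γ : Xp d → Fin d → Fin d3 → ℝ) (r : ℝ) :
    Set (ProbabilityMeasure (Xp d) × (Fin d3 → FiniteMeasure (Xp d × ℝ≥0))) :=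
  {p | Feasible2 β σ γ r p.1.toMeasure (fun i => (p.2 i).toMeasure)}

/-- Mean field reward assumptions: for each fixed measure argument the rewards are
continuous and bounded in the state, `g` is nonnegative, and the rewards are Lipschitz in
the measure argument with respect to the Lévy–Prokhorov metric `d_P`. -/
structure MFRewardAssumptions {d d3 : ℕ} (ℓ : Xp d → ProbabilityMeasure (Xp d) → ℝ)
    (g : Fin d3 → Xp d → ProbabilityMeasure (Xp d) → ℝ) (L : ℝ) : Prop where
  hL : 0 ≤ L
  ℓcont : ∀ ν' : ProbabilityMeasure (Xp d), Continuous (fun x => ℓ x ν')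
  ℓbdd : ∀ ν' : ProbabilityMeasure (Xp d), ∃ C, ∀ x, |ℓ x ν'| ≤ C
  gcont : ∀ (i : Fin d3) (ν' : ProbabilityMeasure (Xp d)), Continuous (fun x => g i x ν')
  gbdd : ∀ (i : Fin d3) (ν' : ProbabilityMeasure (Xp d)), ∃ C, ∀ x, g i x ν' ≤ C
  gpos : ∀ i x ν', 0 ≤ g i x ν'
  ℓlip : ∀ (x : Xp d) (ν₁ ν₂ : ProbabilityMeasure (Xp d)),
    |ℓ x ν₁ - ℓ x ν₂| ≤ L * levyProkhorovDist ν₁.toMeasure ν₂.toMeasure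
  glip : ∀ (i : Fin d3) (x : Xp d) (ν₁ ν₂ : ProbabilityMeasure (Xp d)),
    |g i x ν₁ - g i x ν₂| ≤ L * levyProkhorovDist ν₁.toMeasure ν₂.toMeasure



lemma stmt12_lp_dist_cont {d : ℕ} (ν₀ : ProbabilityMeasure (Xp d)) :
    Continuous fun ν' : ProbabilityMeasure (Xp d) =>
      levyProkhorovDist ν'.toMeasure ν₀.toMeasure := by
  have h := LevyProkhorov.continuous_ofMeasure_probabilityMeasure (Ω := Xp d)
  exact (continuous_dist.comp (h.prodMk (continuous_const (y := LevyProkhorov.ofMeasure ν₀))))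

lemma stmt12_aux_cont {d : ℕ} {X : Type*} [TopologicalSpace X] [MeasurableSpace X]
    [OpensMeasurableSpace X]
    (f : X → ProbabilityMeasure (Xp d) → ℝ) (L : ℝ) (hL : 0 ≤ L)
    (hc : ∀ ν', Continuous fun x => f x ν')
    (hb : ∀ ν', ∃ C, ∀ x, |f x ν'| ≤ C)
    (hlip : ∀ (x : X) (ν₁ ν₂ : ProbabilityMeasure (Xp d)),
      |f x ν₁ - f x ν₂| ≤ L * levyProkhorovDist ν₁.toMeasure ν₂.toMeasure) :
    Continuous fun p : ProbabilityMeasure (Xp d) × FiniteMeasure X =>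
      ∫ x, f x p.1 ∂(p.2 : Measure X) := by
  rw [continuous_iff_continuousAt]
  rintro ⟨ν₀, m₀⟩
  -- the bounded continuous function f(·, ν₀)
  obtain ⟨C₀, hC₀⟩ := hb ν₀
  set F₀ : BoundedContinuousFunction X ℝ := BoundedContinuousFunction.ofNormedAddCommGroup (fun x => f x ν₀) (hc ν₀)
      C₀ (fun x => by simpa [Real.norm_eq_abs] using hC₀ x) with hF₀
  have hF₀x : ∀ x, F₀ x = f x ν₀ := fun x => rfl
  have key : ∀ (ν' : ProbabilityMeasure (Xp d)) (m : FiniteMeasure X),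
      ‖(∫ x, f x ν' ∂(m : Measure X)) - ∫ x, f x ν₀ ∂(m : Measure X)‖
        ≤ (L * levyProkhorovDist ν'.toMeasure ν₀.toMeasure) * (m.mass : ℝ) := by
    intro ν' m
    obtain ⟨C, hC⟩ := hb ν'
    have hint1 : Integrable (fun x => f x ν') (m : Measure X) := by
      have := (BoundedContinuousFunction.ofNormedAddCommGroup (fun x => f x ν') (hc ν')
          C (fun x => by simpa [Real.norm_eq_abs] using hC x)).integrable (μ := (m : Measure X))
      exact this
    have hint0 : Integrable (fun x => f x ν₀) (m : Measure X) := F₀.integrable _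
    rw [← integral_sub hint1 hint0]
    have hbd : ∀ x, ‖f x ν' - f x ν₀‖ ≤ L * levyProkhorovDist ν'.toMeasure ν₀.toMeasure := by
      intro x; simpa [Real.norm_eq_abs] using hlip x ν' ν₀
    have := norm_integral_le_of_norm_le_const (μ := (m : Measure X))
        (f := fun x => f x ν' - f x ν₀) (.of_forall hbd)
    calc ‖∫ x, (f x ν' - f x ν₀) ∂(m : Measure X)‖
        ≤ (L * levyProkhorovDist ν'.toMeasure ν₀.toMeasure) * ((m : Measure X) univ).toReal :=
          this
      _ = (L * levyProkhorovDist ν'.toMeasure ν₀.toMeasure) * (m.mass : ℝ) := by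
          rw [← FiniteMeasure.ennreal_mass, ENNReal.coe_toReal]
  -- the "frozen ν₀" part is continuous
  have hcont0 : Continuous fun p : ProbabilityMeasure (Xp d) × FiniteMeasure X =>
      ∫ x, f x ν₀ ∂(p.2 : Measure X) := by
    have h := FiniteMeasure.continuous_integral_boundedContinuousFunction (X := X) F₀
    simpa [hF₀x, Function.comp_def] using h.comp (continuous_snd : Continuous (Prod.snd : ProbabilityMeasure (Xp d) × FiniteMeasure X → FiniteMeasure X))
  -- the difference tends to zero
  have hB : Continuous fun p : ProbabilityMeasure (Xp d) × FiniteMeasure X =>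
      (L * levyProkhorovDist p.1.toMeasure ν₀.toMeasure) * (p.2.mass : ℝ) := by
    exact ((continuous_const.mul ((stmt12_lp_dist_cont ν₀).comp continuous_fst)).mul
      ((NNReal.continuous_coe.comp FiniteMeasure.continuous_mass).comp continuous_snd))
  have hB0 : Tendsto (fun p : ProbabilityMeasure (Xp d) × FiniteMeasure X =>
      (L * levyProkhorovDist p.1.toMeasure ν₀.toMeasure) * (p.2.mass : ℝ)) (𝓝 (ν₀, m₀))
      (𝓝 0) := by
    have := hB.tendsto (ν₀, m₀)
    simpa [levyProkhorovDist_self] using this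
  have hdiff : Tendsto (fun p : ProbabilityMeasure (Xp d) × FiniteMeasure X =>
      (∫ x, f x p.1 ∂(p.2 : Measure X)) - ∫ x, f x ν₀ ∂(p.2 : Measure X)) (𝓝 (ν₀, m₀))
      (𝓝 0) :=
    squeeze_zero_norm (fun p => key p.1 p.2) hB0
  have : Tendsto (fun p : ProbabilityMeasure (Xp d) × FiniteMeasure X =>
      ∫ x, f x p.1 ∂(p.2 : Measure X)) (𝓝 (ν₀, m₀)) (𝓝 (∫ x, f x ν₀ ∂(m₀ : Measure X))) := by
    have := hdiff.add (hcont0.tendsto (ν₀, m₀))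
    simpa using this
  exact this

set_option synthInstance.maxSize 512

/-- Under the Case (ii) standing assumptions and the mean field reward
assumptions, the map `Ψ : 𝕍×𝕍 → ℝ`,
`Ψ(ν₁,μ₁,ν₂,μ₂) = ∫ℓ(x,ν₁) ν₂(dx) + Σ_i ∫g_i(x,ν₁) μ₂ᵢ(dx,dy)` (not depending on `μ₁`),
is continuous for the product of the weak-convergence topologies. -/
theorem stmt12 {d d1 d3 : ℕ} (β : Xp d → Euc d) (σ : Xp d → Fin d → Fin d1 → ℝ)
    (γ : Xp d → Fin d → Fin d3 → ℝ) (r s cσ c₀ c₁ c₂ cγ γbar : ℝ)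
    (hass : CaseIIAssumptions β σ γ r s cσ c₀ c₁ c₂ cγ γbar)
    (ℓ : Xp d → ProbabilityMeasure (Xp d) → ℝ)
    (g : Fin d3 → Xp d → ProbabilityMeasure (Xp d) → ℝ) (L : ℝ)
    (hrew : MFRewardAssumptions ℓ g L) :
    Continuous (fun q : ↥(Vset β σ γ r) × ↥(Vset β σ γ r) =>
      ∫ x, ℓ x q.1.val.1 ∂(q.2.val.1.toMeasure)
        + ∑ i, ∫ p, g i p.1 q.1.val.1 ∂((q.2.val.2 i).toMeasure)) := by
  have h1 : Continuous (fun q : ↥(Vset β σ γ r) × ↥(Vset β σ γ r) =>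
      ∫ x, ℓ x q.1.val.1 ∂(q.2.val.1.toMeasure)) := by
    have hmain := stmt12_aux_cont (X := Xp d) ℓ L hrew.hL hrew.ℓcont hrew.ℓbdd hrew.ℓlip
    have hinner : Continuous (fun q : ↥(Vset β σ γ r) × ↥(Vset β σ γ r) =>
        (q.1.val.1, q.2.val.1.toFiniteMeasure)) :=
      ((continuous_subtype_val.comp continuous_fst).fst.prodMk
        (ProbabilityMeasure.toFiniteMeasure_continuous.comp
          (continuous_subtype_val.comp continuous_snd).fst))
    exact hmain.comp hinner
  have h2 : ∀ i : Fin d3, Continuous (fun q : ↥(Vset β σ γ r) × ↥(Vset β σ γ r) =>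
      ∫ p, g i p.1 q.1.val.1 ∂((q.2.val.2 i).toMeasure)) := by
    intro i
    have hbdd : ∀ ν' : ProbabilityMeasure (Xp d), ∃ C, ∀ p : Xp d × ℝ≥0, |g i p.1 ν'| ≤ C := by
      intro ν'
      obtain ⟨C, hC⟩ := hrew.gbdd i ν'
      exact ⟨C, fun p => by rw [abs_of_nonneg (hrew.gpos i p.1 ν')]; exact hC p.1⟩
    have hmain := stmt12_aux_cont (X := Xp d × ℝ≥0) (fun p ν' => g i p.1 ν') L hrew.hL
      (fun ν' => (hrew.gcont i ν').comp continuous_fst) hbdd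
      (fun p ν₁ ν₂ => hrew.glip i p.1 ν₁ ν₂)
    have hinner : Continuous (fun q : ↥(Vset β σ γ r) × ↥(Vset β σ γ r) =>
        (q.1.val.1, q.2.val.2 i)) :=
      ((continuous_subtype_val.comp continuous_fst).fst.prodMk
        ((continuous_apply i).comp (continuous_subtype_val.comp continuous_snd).snd))
    exact hmain.comp hinner
  exact h1.add (continuous_finset_sum _ (fun i _ => h2 i))
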